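/- Suppose $Y(z)$ satisfies the recursion $Y(z) = Y(z-1)\lambda_z + \sqrt{1/N_z}\,(1-\lambda_z)$, where $N_z = \sum_{x \le z} n_x$, $N_0 = 0$, $n_x \ge 0$, $H \ge 1$, $\lambda_z = \frac{N_{z-1}}{N_z + H n_z}$ when $N_z > 0$ and $\lambda_z = 1$ when $N_z = 0$, with $Y(1) = \sqrt{1/N_1}$ if $n_1 > 0$ and $Y(1) = 0$ otherwise. Then for every $z$ with $N_z > 0$, $\sqrt{\frac{1}{N_z}} \le Y(z) \le \sqrt{\frac{4}{N_z}}$. -/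
import Mathlib

lemma stmt_7_aux_up (a b D : ℝ) (ha : 0 < a) (hb : 0 < b) (hD : b^2 ≤ D) :
    2/a * (a^2/D) + 1/b * (1 - a^2/D) ≤ 2/b := by
  have hD0 : 0 < D := lt_of_lt_of_le (by positivity) hD
  have key : 2*a*b ≤ D + a^2 := by nlinarith [sq_nonneg (a - b)]
  have heq : 2/b - (2/a * (a^2/D) + 1/b * (1 - a^2/D)) = (D + a^2 - 2*a*b)/(b*D) := by
    field_simp; ring
  have hnn : (0:ℝ) ≤ (D + a^2 - 2*a*b)/(b*D) := by
    apply div_nonneg (by linarith) (by positivity)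
  linarith

/-- Two-sided bound on the accumulated penalty `Y`: with per-round visit counts
`n x : ℕ`, cumulative counts `N z = ∑_{x=1}^z n x`, `H ≥ 1`, contraction factors
`λ z = N (z-1) / (N z + H n z)` when `N z > 0` and `λ z = 1` when `N z = 0`,
initial value `Y 1 = √(1/N 1)` if `n 1 > 0` (else `0`), and recursion
`Y z = Y (z-1) λ z + √(1/N z) (1 - λ z)`, one has for every `z ≥ 1` with
`N z > 0` that `√(1/N z) ≤ Y z ≤ √(4/N z)`. -/
theorem stmt_7 (H : ℕ) (hH : 1 ≤ H)
    (n : ℕ → ℕ)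
    (N : ℕ → ℕ) (hN : ∀ z, N z = ∑ x ∈ Finset.Icc 1 z, n x)
    (lam : ℕ → ℝ)
    (hlam0 : ∀ z, N z = 0 → lam z = 1)
    (hlam1 : ∀ z, 0 < N z → lam z = (N (z - 1) : ℝ) / ((N z : ℝ) + (H : ℝ) * n z))
    (Y : ℕ → ℝ)
    (hY1pos : 0 < n 1 → Y 1 = Real.sqrt (1 / (N 1 : ℝ)))
    (hY1zero : n 1 = 0 → Y 1 = 0)
    (hYrec : ∀ z, 2 ≤ z →
      Y z = Y (z - 1) * lam z + Real.sqrt (1 / (N z : ℝ)) * (1 - lam z)) :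
    ∀ z, 1 ≤ z → 0 < N z →
      Real.sqrt (1 / (N z : ℝ)) ≤ Y z ∧ Y z ≤ Real.sqrt (4 / (N z : ℝ)) := by
  have hsqrt4 : Real.sqrt 4 = 2 := by
    rw [show (4:ℝ) = 2^2 by norm_num, Real.sqrt_sq (by norm_num)]
  have h4div : ∀ x : ℝ, Real.sqrt (4 / x) = 2 / Real.sqrt x := by
    intro x
    rw [Real.sqrt_div (by norm_num), hsqrt4]
  have h1div : ∀ x : ℝ, Real.sqrt (1 / x) = 1 / Real.sqrt x := by
    intro x
    rw [one_div, Real.sqrt_inv, one_div]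
  have hmono : ∀ k, N (k + 1) = N k + n (k + 1) := by
    intro k
    rw [hN, hN, Finset.sum_Icc_succ_top (by omega : 1 ≤ k + 1)]
  intro z
  induction z with
  | zero => intro h; omega
  | succ k ih =>
    intro _ hNz
    have hB : (0:ℝ) < (N (k+1) : ℝ) := by exact_mod_cast hNz
    by_cases hk : k = 0
    · -- base case z = 1
      subst hk
      have hN1 : N 1 = n 1 := by rw [hN]; simp
      have hNz' : 0 < N 1 := hNz
      have hn1 : 0 < n 1 := by omega
      have hY1 := hY1pos hn1
      refine ⟨le_of_eq hY1.symm, ?_⟩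
      rw [hY1, h1div, h4div]
      have : (0:ℝ) < Real.sqrt (N 1) := Real.sqrt_pos.mpr hB
      rw [div_le_div_iff₀ this this]
      nlinarith
    · have hk1 : 1 ≤ k := by omega
      have hrec := hYrec (k+1) (by omega)
      simp only [Nat.add_sub_cancel] at hrec
      have hlamv := hlam1 (k+1) hNz
      simp only [Nat.add_sub_cancel] at hlamv
      set A : ℝ := (N k : ℝ) with hA
      set B : ℝ := (N (k+1) : ℝ) with hBdef
      set D : ℝ := B + (H : ℝ) * n (k+1) with hD
      have hAB : A ≤ B := by
        have := hmono k
        rw [hA, hBdef]; exact_mod_cast by omega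
      have hBD : B ≤ D := by
        have : (0:ℝ) ≤ (H : ℝ) * n (k+1) := by positivity
        linarith
      have hDpos : 0 < D := lt_of_lt_of_le hB hBD
      have hb : (0:ℝ) < Real.sqrt B := Real.sqrt_pos.mpr hB
      by_cases hNk : N k = 0
      · -- previous count zero: lam = 0
        have hA0 : A = (0:ℝ) := by rw [hA, hNk]; norm_num
        have hlam0' : lam (k+1) = 0 := by rw [hlamv, hA0, zero_div]
        have hrec' : Y (k+1) = Real.sqrt (1 / B) := by rw [hrec, hlam0']; ring
        refine ⟨le_of_eq hrec'.symm, ?_⟩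
        rw [hrec', h1div, h4div, div_le_div_iff₀ hb hb]
        nlinarith
      · have hNkpos : 0 < N k := by omega
        have hApos : (0:ℝ) < A := by rw [hA]; exact_mod_cast hNkpos
        have ha : (0:ℝ) < Real.sqrt A := Real.sqrt_pos.mpr hApos
        have hab : Real.sqrt A ≤ Real.sqrt B := Real.sqrt_le_sqrt hAB
        obtain ⟨hlo, hhi⟩ := ih hk1 hNkpos
        rw [h1div] at hlo
        rw [h4div] at hhi
        have ha2 : Real.sqrt A ^ 2 = A := Real.sq_sqrt hApos.le
        have hb2 : Real.sqrt B ^ 2 = B := Real.sq_sqrt hB.le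
        have hlamval : lam (k+1) = Real.sqrt A ^ 2 / D := by rw [hlamv, ha2]
        have hlamnn : 0 ≤ lam (k+1) := by
          rw [hlamval]; positivity
        have hlamle1 : lam (k+1) ≤ 1 := by
          rw [hlamval, ha2, div_le_one hDpos]; linarith
        constructor
        · -- lower bound
          rw [h1div, hrec, h1div]
          have h1 : 1 / Real.sqrt B ≤ 1 / Real.sqrt A :=
            one_div_le_one_div_of_le ha hab
          have : 1 / Real.sqrt B * lam (k+1) + 1 / Real.sqrt B * (1 - lam (k+1))
              ≤ Y k * lam (k+1) + 1 / Real.sqrt B * (1 - lam (k+1)) := by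
            have : 1 / Real.sqrt B ≤ Y k := le_trans h1 hlo
            nlinarith
          calc 1 / Real.sqrt B
              = 1 / Real.sqrt B * lam (k+1) + 1 / Real.sqrt B * (1 - lam (k+1)) := by ring
            _ ≤ Y k * lam (k+1) + 1 / Real.sqrt B * (1 - lam (k+1)) := this
        · -- upper bound
          rw [h4div, hrec, h1div]
          have step1 : Y k * lam (k+1) + 1 / Real.sqrt B * (1 - lam (k+1))
              ≤ 2 / Real.sqrt A * lam (k+1) + 1 / Real.sqrt B * (1 - lam (k+1)) := by
            nlinarith
          have step2 : 2 / Real.sqrt A * lam (k+1) + 1 / Real.sqrt B * (1 - lam (k+1))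
              ≤ 2 / Real.sqrt B := by
            rw [hlamval]
            have := stmt_7_aux_up (Real.sqrt A) (Real.sqrt B) D ha hb (by rw [hb2]; exact hBD)
            linarith
          linarith
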